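/- The generating function C_q^{(m)}(u) = E^{(m)}(-qu)/E^{(m)}(-u) satisfies C_q^{(m)}(u) = 1 + u · C_q^{(m)}(u) C_q^{(m)}(qu) ··· C_q^{(m)}(q^{m-1}u) as formal power series. -/

import Mathlib

/-- The q-Pochhammer symbol `(a;q)_n`. -/
noncomputable def qPoch (a q : ℝ) (n : ℕ) : ℝ := ∏ j ∈ Finset.range n, (1 - q ^ j * a)

open PowerSeries

lemma qPoch_pos (q : ℝ) (hq0 : 0 < q) (hq1 : q < 1) (n : ℕ) : 0 < qPoch q q n := by
  unfold qPoch
  apply Finset.prod_pos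
  intro j _
  have h1 : q ^ j * q = q ^ (j + 1) := by ring
  have : q ^ (j + 1) < 1 := pow_lt_one₀ hq0.le hq1 (Nat.succ_ne_zero j)
  rw [h1]; linarith

lemma rescale_inv (a : ℝ) (f : PowerSeries ℝ) (h : PowerSeries.constantCoeff f ≠ 0) :
    PowerSeries.rescale a (f⁻¹) = (PowerSeries.rescale a f)⁻¹ := by
  have hc : PowerSeries.constantCoeff (PowerSeries.rescale a f) ≠ 0 := by
    have := PowerSeries.coeff_rescale f a 0
    simp only [pow_zero, one_mul] at this
    rwa [← PowerSeries.coeff_zero_eq_constantCoeff, this, PowerSeries.coeff_zero_eq_constantCoeff]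
  rw [PowerSeries.eq_inv_iff_mul_eq_one hc]
  rw [← map_mul, PowerSeries.inv_mul_cancel f h, map_one]

theorem q_m_catalan_gf_equation (q : ℝ) (hq0 : 0 < q) (hq1 : q < 1)
    (m : ℕ) (hm : 1 ≤ m)
    (E C : PowerSeries ℝ)
    (hE : E = PowerSeries.mk fun n => q ^ (m * (n * (n - 1) / 2)) / qPoch q q n)
    (hC : C = PowerSeries.rescale (-q) E * (PowerSeries.rescale (-1) E)⁻¹) :
    C = 1 + PowerSeries.X * ∏ i ∈ Finset.range m, PowerSeries.rescale (q ^ i) C := by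
  set e : ℕ → ℝ := fun n => q ^ (m * (n * (n - 1) / 2)) / qPoch q q n with he
  have hqP : ∀ n, qPoch q q n ≠ 0 := fun n => (qPoch_pos q hq0 hq1 n).ne'
  have hE0 : PowerSeries.constantCoeff E = 1 := by
    rw [hE, ← PowerSeries.coeff_zero_eq_constantCoeff, PowerSeries.coeff_mk]
    simp [he, qPoch]
  -- constant coefficient of any rescale of E
  have hresc0 : ∀ a : ℝ, PowerSeries.constantCoeff (PowerSeries.rescale a E) = 1 := by
    intro a
    rw [← PowerSeries.coeff_zero_eq_constantCoeff, PowerSeries.coeff_rescale]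
    simpa using hE0
  set F : ℕ → PowerSeries ℝ := fun i => PowerSeries.rescale (-(q ^ i)) E with hF
  have hF0 : ∀ i, PowerSeries.constantCoeff (F i) = 1 := fun i => hresc0 _
  have hFne : ∀ i, PowerSeries.constantCoeff (F i) ≠ 0 := fun i => by
    rw [hF0]; exact one_ne_zero
  -- key coefficient identity
  have key : ∀ n : ℕ,
      (-q) ^ (n + 1) * e (n + 1) = (-1 : ℝ) ^ (n + 1) * e (n + 1) + (-(q ^ m)) ^ n * e n := by
    intro n
    have hP : qPoch q q (n + 1) = qPoch q q n * (1 - q ^ n * q) := by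
      unfold qPoch; rw [Finset.prod_range_succ]
    have hq1n : q ^ n * q = q ^ (n + 1) := by ring
    have hne : (1 : ℝ) - q ^ (n + 1) ≠ 0 := by
      have : q ^ (n + 1) < 1 := pow_lt_one₀ hq0.le hq1 (Nat.succ_ne_zero n)
      linarith
    have hexp : m * ((n + 1) * (n + 1 - 1) / 2) = m * n + m * (n * (n - 1) / 2) := by
      have h2 : (n + 1) * (n + 1 - 1) / 2 = n + n * (n - 1) / 2 := by
        rcases n with _ | k
        · simp
        · simp only [Nat.add_sub_cancel]
          have hmul : (k + 1 + 1) * (k + 1) = (k + 1) * k + (k + 1) * 2 := by ring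
          rw [hmul, Nat.add_mul_div_right _ _ (by norm_num : 0 < 2)]
          exact Nat.add_comm _ _
      rw [h2]; ring
    have hqexp : q ^ (m * ((n + 1) * (n + 1 - 1) / 2))
        = q ^ (m * n) * q ^ (m * (n * (n - 1) / 2)) := by
      rw [hexp, pow_add]
    have hneg1 : (-q : ℝ) ^ (n + 1) = (-1 : ℝ) ^ (n + 1) * q ^ (n + 1) := by
      rw [neg_pow]
    have hneg2 : (-(q ^ m) : ℝ) ^ n = (-1 : ℝ) ^ n * q ^ (m * n) := by
      rw [neg_pow]; rw [← pow_mul]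
    simp only [he, hP, hq1n, hqexp, hneg1, hneg2]
    have hpn := hqP n
    rw [pow_succ (-1 : ℝ) n]
    field_simp
    ring
  -- functional equation : F 1 = F 0 + X * F m
  have feq : F 1 = F 0 + PowerSeries.X * F m := by
    ext n
    rw [hF]
    simp only [map_add]
    cases n with
    | zero =>
        rw [PowerSeries.coeff_zero_eq_constantCoeff]
        simp only [map_add, map_mul, PowerSeries.constantCoeff_X, zero_mul, add_zero]
        rw [hresc0, hresc0]
    | succ n =>
        rw [PowerSeries.coeff_rescale, PowerSeries.coeff_rescale,
          PowerSeries.coeff_succ_X_mul, PowerSeries.coeff_rescale]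
        rw [hE]
        simp only [PowerSeries.coeff_mk]
        have := key n
        simp only [he] at this
        have h1 : (-(q ^ 1) : ℝ) = -q := by rw [pow_one]
        have h0 : (-(q ^ 0) : ℝ) = -1 := by rw [pow_zero]
        rw [h1, h0]
        exact this
  -- rescaled C
  have hCresc : ∀ i : ℕ, PowerSeries.rescale (q ^ i) C = F (i + 1) * (F i)⁻¹ := by
    intro i
    rw [hC, map_mul]
    rw [rescale_inv _ _ (by rw [show ((-1 : ℝ)) = -(q ^ 0) by simp ]; exact hFne 0)]
    rw [PowerSeries.rescale_rescale, PowerSeries.rescale_rescale]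
    have e1 : (-q) * q ^ i = -(q ^ (i + 1)) := by ring
    have e2 : (-1 : ℝ) * q ^ i = -(q ^ i) := by ring
    rw [e1, e2]
  -- telescoping
  have tele : ∀ k : ℕ, ∏ i ∈ Finset.range k, PowerSeries.rescale (q ^ i) C
      = F k * (F 0)⁻¹ := by
    intro k
    induction k with
    | zero =>
        rw [Finset.prod_range_zero, PowerSeries.mul_inv_cancel _ (hFne 0)]
    | succ k ih =>
        rw [Finset.prod_range_succ, ih, hCresc k]
        have : F k * (F 0)⁻¹ * (F (k + 1) * (F k)⁻¹)
            = F (k + 1) * (F 0)⁻¹ * ((F k)⁻¹ * F k) := by ring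
        rw [this, PowerSeries.inv_mul_cancel _ (hFne k), mul_one]
  rw [tele m]
  have hF1 : F 1 = PowerSeries.rescale (-q) E := by simp only [hF, pow_one]
  have hFz : F 0 = PowerSeries.rescale (-1) E := by simp only [hF, pow_zero]
  have hC1 : C = F 1 * (F 0)⁻¹ := by rw [hC, hF1, hFz]
  rw [hC1, feq, add_mul, PowerSeries.mul_inv_cancel _ (hFne 0), mul_assoc]
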